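/- arXiv:2304.13816 — 4 statements merged into one kernel-verified Lean document; each statement's English description precedes it below -/
import Mathlib

section
/- For classical LTL over infinite words, GF(φ) ≡ GF(ψ) ∧ ⋀_{i∈I} FG(φᵢ) ∧ ⋀_{j∈J} GF(φⱼ), where φ = ψ ∧ ⋀_{i∈I} G(φᵢ) ∧ ⋀_{j∈J} F(φⱼ). -/
/-- GF(ψ ∧ ⋀ᵢ G φᵢ ∧ ⋀ⱼ F φⱼ) ≡ GF ψ ∧ ⋀ᵢ FG φᵢ ∧ ⋀ⱼ GF φⱼ -/
theorem stmt_3 {I J : Type*} [Fintype I] [Fintype J]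
    (P : ℕ → Prop) (Q : I → ℕ → Prop) (R : J → ℕ → Prop) :
    (∀ n, ∃ m, n ≤ m ∧ (P m ∧ (∀ i, ∀ k, m ≤ k → Q i k) ∧ (∀ j, ∃ k, m ≤ k ∧ R j k)))
      ↔ ((∀ n, ∃ m, n ≤ m ∧ P m) ∧ (∀ i, ∃ n, ∀ m, n ≤ m → Q i m) ∧
          (∀ j, ∀ n, ∃ m, n ≤ m ∧ R j m)) := by
  constructor
  · intro h
    refine ⟨fun n => ?_, fun i => ?_, fun j n => ?_⟩
    · obtain ⟨m, hm, hP, _, _⟩ := h n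
      exact ⟨m, hm, hP⟩
    · obtain ⟨m, _, _, hQ, _⟩ := h 0
      exact ⟨m, hQ i⟩
    · obtain ⟨m, hm, _, _, hR⟩ := h n
      obtain ⟨k, hk, hRk⟩ := hR j
      exact ⟨k, le_trans hm hk, hRk⟩
  · rintro ⟨hP, hQ, hR⟩ n
    choose f hf using hQ
    let N := Finset.univ.sup f
    obtain ⟨m, hm, hPm⟩ := hP (max n N)
    refine ⟨m, le_trans (le_max_left _ _) hm, hPm, fun i k hk => ?_, fun j => hR j m⟩
    exact hf i k (le_trans (le_trans (Finset.le_sup (Finset.mem_univ i)) (le_trans (le_max_right _ _) hm)) hk)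
end

section
/- For LTL over infinite words (without Next), the equivalence (ψ ∨ ψ') U φ ≡ (ψ U ψ') U ((ψ' U ψ) U φ) holds, where α U β holds at position i iff there exists j ≥ i with β at j and α at all positions in [i, j). -/
/-- Classical until semantics over infinite words, for predicates on positions. -/
def LTLUntil (P Q : ℕ → Prop) (i : ℕ) : Prop :=
  ∃ j, i ≤ j ∧ Q j ∧ ∀ k, i ≤ k → k < j → P k

/-- (ψ ∨ ψ') U φ ≡ (ψ U ψ') U ((ψ' U ψ) U φ) -/
theorem stmt_5 (P P' Q : ℕ → Prop) (i : ℕ) :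
    LTLUntil (fun n => P n ∨ P' n) Q i ↔
      LTLUntil (LTLUntil P P') (LTLUntil (LTLUntil P' P) Q) i := by
  classical
  constructor
  · rintro ⟨j, hij, hQ, hPQ⟩
    -- m : least k such that P holds on [k, j)
    have hex : ∃ k, ∀ l, k ≤ l → l < j → P l := ⟨j, fun l hl hl' => absurd hl' (by omega)⟩
    set m := Nat.find hex with hm
    have hmspec : ∀ l, m ≤ l → l < j → P l := Nat.find_spec hex
    have hmj : m ≤ j := Nat.find_min' hex (fun l hl hl' => absurd hl' (by omega))
    refine ⟨max i m, le_max_left _ _, ?_, ?_⟩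
    · -- LTLUntil (LTLUntil P' P) Q at (max i m)
      refine ⟨j, by omega, hQ, fun k hk hk' => ?_⟩
      exact ⟨k, le_rfl, hmspec k (by omega) hk', fun t ht ht' => absurd ht' (by omega)⟩
    · -- ∀ k ∈ [i, max i m), LTLUntil P P' k
      intro k hik hk
      have hkm : k < m := by omega
      have hnk : ¬ ∀ l, k ≤ l → l < j → P l := Nat.find_min hex hkm
      push_neg at hnk
      obtain ⟨l0, hkl0, hl0j, hnP⟩ := hnk
      have hex2 : ∃ l, k ≤ l ∧ l < j ∧ ¬ P l := ⟨l0, hkl0, hl0j, hnP⟩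
      set l := Nat.find hex2 with hl
      obtain ⟨hkl, hlj, hnPl⟩ := Nat.find_spec hex2
      have hP'l : P' l := by
        rcases hPQ l (by omega) hlj with h | h
        · exact absurd h hnPl
        · exact h
      refine ⟨l, hkl, hP'l, fun t ht ht' => ?_⟩
      have := Nat.find_min hex2 ht'
      push_neg at this
      exact this ht (by omega)
  · rintro ⟨j, hij, ⟨m, hjm, hQ, hC⟩, hA⟩
    refine ⟨m, by omega, hQ, fun k hik hkm => ?_⟩
    by_cases hkj : k < j
    · obtain ⟨l, hkl, hP'l, hP⟩ := hA k hik hkj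
      rcases eq_or_lt_of_le hkl with rfl | hlt
      · exact Or.inr hP'l
      · exact Or.inl (hP k le_rfl hlt)
    · obtain ⟨l, hkl, hPl, hP'⟩ := hC k (by omega) hkm
      rcases eq_or_lt_of_le hkl with rfl | hlt
      · exact Or.inl hPl
      · exact Or.inr (hP' k le_rfl hlt)
end

section
/- Let M ∈ ℝ^{d×n}, A ∈ ℝ^{k×d}, b ∈ ℝ^k, and z ∈ ℝ^d. Suppose there exist v₁ ∈ ℝ^k with v₁ ≥ 0 and v₂ ≥ 0 such that v₁ᵀ·A·M ≥ v₂·𝟙ᵀ componentwise and v₂ > 0. Then there is no infinite sequence of points z = z₀, z₁, z₂, … with each A·zₙ ≤ b, where zₙ = z + M·λₙ for nonnegative vectors λ₀ ≤ λ₁ ≤ λ₂ ≤ … ∈ ℝ^n whose total sums 𝟙ᵀ·λₙ tend to infinity. -/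
open Matrix Filter

theorem stmt_11 {d n k : ℕ}
    (M : Matrix (Fin d) (Fin n) ℝ) (A : Matrix (Fin k) (Fin d) ℝ)
    (b : Fin k → ℝ) (z : Fin d → ℝ)
    (v₁ : Fin k → ℝ) (hv₁ : ∀ i, 0 ≤ v₁ i) (v₂ : ℝ) (hv₂ : 0 < v₂)
    (hdual : ∀ j, v₂ ≤ Matrix.vecMul (Matrix.vecMul v₁ A) M j) :
    ¬ ∃ lam : ℕ → (Fin n → ℝ),
        (∀ m i, 0 ≤ lam m i) ∧
        (∀ m i, lam m i ≤ lam (m + 1) i) ∧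
        Tendsto (fun m => ∑ i, lam m i) atTop atTop ∧
        (∀ m j, (A.mulVec (z + M.mulVec (lam m))) j ≤ b j) := by
  rintro ⟨lam, hnn, _, htend, hle⟩
  set C : ℝ := v₁ ⬝ᵥ b - v₁ ⬝ᵥ A.mulVec z with hC
  have key : ∀ m, v₂ * ∑ i, lam m i ≤ C := by
    intro m
    have h1 : v₁ ⬝ᵥ A.mulVec (z + M.mulVec (lam m)) ≤ v₁ ⬝ᵥ b := by
      apply Finset.sum_le_sum
      intro j _
      exact mul_le_mul_of_nonneg_left (hle m j) (hv₁ j)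
    have h2 : v₁ ⬝ᵥ A.mulVec (z + M.mulVec (lam m))
        = v₁ ⬝ᵥ A.mulVec z + (v₁ ᵥ* A ᵥ* M) ⬝ᵥ lam m := by
      rw [A.mulVec_add, dotProduct_add, ← Matrix.dotProduct_mulVec,
        ← Matrix.dotProduct_mulVec]
    have h3 : v₂ * ∑ i, lam m i ≤ (v₁ ᵥ* A ᵥ* M) ⬝ᵥ lam m := by
      rw [Finset.mul_sum]
      apply Finset.sum_le_sum
      intro i _
      exact mul_le_mul_of_nonneg_right (hdual i) (hnn m i)
    rw [h2] at h1
    linarith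
  obtain ⟨m, hm⟩ := (htend.eventually_gt_atTop (C / v₂)).exists
  have := key m
  have : C / v₂ < C / v₂ := lt_of_lt_of_le hm (by
    rw [le_div_iff₀ hv₂]; linarith)
  exact lt_irrefl _ this
end

section
/- Let Z ⊆ ℝ^d be convex and let x →^{ρ (α,m) ρ'} y be a finite trajectory staying in Z, meaning: starting at x, applying the displacement sequence of ρ, then α·m, then ρ', all partial points (including along each segment) remain in Z. Then the trajectory x →^{ρ (α/2, m) (1/2)ρ' (α/2, m)} also stays entirely in Z, where (1/2)ρ' denotes ρ' with all durations halved. -/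
/-- A schedule is a finite list of (duration, mode) pairs. `StaysIn Z x π` says
that the piecewise-linear trajectory induced by `π` from `x` remains in `Z`. -/
def StaysIn {d : ℕ} (Z : Set (Fin d → ℝ)) : (Fin d → ℝ) → List (ℝ × (Fin d → ℝ)) → Prop
  | x, [] => x ∈ Z
  | x, (a, m) :: rest =>
      (∀ t ∈ Set.Icc (0 : ℝ) a, x + t • m ∈ Z) ∧ StaysIn Z (x + a • m) rest

/-- Endpoint of the trajectory. -/
def endPt {d : ℕ} : (Fin d → ℝ) → List (ℝ × (Fin d → ℝ)) → (Fin d → ℝ)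
  | x, [] => x
  | x, (a, m) :: rest => endPt (x + a • m) rest

lemma staysIn_append {d : ℕ} {Z : Set (Fin d → ℝ)} {π₁ π₂ : List (ℝ × (Fin d → ℝ))} :
    ∀ {x : Fin d → ℝ}, StaysIn Z x π₁ → StaysIn Z (endPt x π₁) π₂ →
      StaysIn Z x (π₁ ++ π₂) := by
  induction π₁ with
  | nil => intro x _ h2; simpa [endPt] using h2
  | cons p rest ih =>
      obtain ⟨a, mm⟩ := p
      intro x h1 h2
      exact ⟨h1.1, ih h1.2 h2⟩

lemma staysIn_start {d : ℕ} {Z : Set (Fin d → ℝ)} {π : List (ℝ × (Fin d → ℝ))}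
    {x : Fin d → ℝ} (hnn : ∀ p ∈ π, (0:ℝ) ≤ p.1) (h : StaysIn Z x π) : x ∈ Z := by
  cases π with
  | nil => exact h
  | cons p rest =>
      obtain ⟨a, mm⟩ := p
      have := h.1 0 ⟨le_refl 0, hnn (a, mm) (by simp)⟩
      simpa using this

lemma staysIn_split {d : ℕ} {Z : Set (Fin d → ℝ)} {π₁ π₂ : List (ℝ × (Fin d → ℝ))}
    (hnn : ∀ p ∈ π₂, (0:ℝ) ≤ p.1) :
    ∀ {x : Fin d → ℝ}, StaysIn Z x (π₁ ++ π₂) →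
      StaysIn Z x π₁ ∧ StaysIn Z (endPt x π₁) π₂ := by
  induction π₁ with
  | nil =>
      intro x h
      exact ⟨staysIn_start hnn (by simpa using h), by simpa [endPt] using h⟩
  | cons p rest ih =>
      obtain ⟨a, mm⟩ := p
      intro x h
      obtain ⟨h1, h2⟩ := h
      obtain ⟨h3, h4⟩ := ih h2
      exact ⟨⟨h1, h3⟩, h4⟩

lemma staysIn_end {d : ℕ} {Z : Set (Fin d → ℝ)} {π : List (ℝ × (Fin d → ℝ))} :
    ∀ {x : Fin d → ℝ}, StaysIn Z x π → endPt x π ∈ Z := by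
  induction π with
  | nil => intro x h; exact h
  | cons p rest ih =>
      obtain ⟨a, mm⟩ := p
      intro x h
      exact ih h.2

lemma endPt_half {d : ℕ} {π : List (ℝ × (Fin d → ℝ))} :
    ∀ {w w' : Fin d → ℝ},
      endPt ((1/2 : ℝ) • w + (1/2 : ℝ) • w') (π.map (fun p => (p.1 / 2, p.2)))
        = (1/2 : ℝ) • endPt w π + (1/2 : ℝ) • w' := by
  induction π with
  | nil => intro w w'; simp [endPt]
  | cons p rest ih =>
      obtain ⟨a, mm⟩ := p
      intro w w'
      simp only [List.map_cons, endPt]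
      rw [show (1/2 : ℝ) • w + (1/2 : ℝ) • w' + (a / 2) • mm
            = (1/2 : ℝ) • (w + a • mm) + (1/2 : ℝ) • w' by module]
      exact ih

lemma staysIn_half {d : ℕ} {Z : Set (Fin d → ℝ)} (hZ : Convex ℝ Z)
    {π : List (ℝ × (Fin d → ℝ))} :
    ∀ {w w' : Fin d → ℝ}, w' ∈ Z → StaysIn Z w π →
      StaysIn Z ((1/2 : ℝ) • w + (1/2 : ℝ) • w') (π.map (fun p => (p.1 / 2, p.2))) := by
  induction π with
  | nil =>
      intro w w' hw' hw
      exact hZ hw hw' (by norm_num) (by norm_num) (by norm_num)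
  | cons p rest ih =>
      obtain ⟨a, mm⟩ := p
      intro w w' hw' hw
      refine ⟨?_, ?_⟩
      · intro t ht
        have h2t : (2 * t) ∈ Set.Icc (0:ℝ) a := ⟨by linarith [ht.1], by linarith [ht.2]⟩
        have hmem := hZ (hw.1 (2 * t) h2t) hw' (by norm_num) (by norm_num) (by norm_num : (1/2:ℝ) + 1/2 = 1)
        convert hmem using 1
        module
      · rw [show (1/2 : ℝ) • w + (1/2 : ℝ) • w' + (a / 2) • mm
              = (1/2 : ℝ) • (w + a • mm) + (1/2 : ℝ) • w' by module]
        exact ih hw' hw.2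

theorem stmt_15 {d : ℕ} (Z : Set (Fin d → ℝ)) (hZ : Convex ℝ Z)
    (x : Fin d → ℝ) (ρ ρ' : List (ℝ × (Fin d → ℝ))) (α : ℝ) (hα : 0 < α)
    (m : Fin d → ℝ)
    (hdur : ∀ p ∈ ρ ++ [(α, m)] ++ ρ', 0 < p.1)
    (hsafe : StaysIn Z x (ρ ++ [(α, m)] ++ ρ')) :
    StaysIn Z x
      (ρ ++ [(α / 2, m)] ++ ρ'.map (fun p => (p.1 / 2, p.2)) ++ [(α / 2, m)]) := by
  rw [List.append_assoc] at hsafe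
  have hnn : ∀ p ∈ [(α, m)] ++ ρ', (0:ℝ) ≤ p.1 := by
    intro p hp
    exact (hdur p (by simp at hp ⊢; tauto)).le
  obtain ⟨hρ, hy⟩ := staysIn_split hnn hsafe
  set y := endPt x ρ with hy_def
  simp only [List.cons_append, List.nil_append] at hy
  obtain ⟨hseg, hrest⟩ := hy
  have hyZ : y ∈ Z := by simpa using hseg 0 ⟨le_refl 0, hα.le⟩
  -- reassociate the goal
  rw [List.append_assoc, List.append_assoc, ← List.append_assoc ([(α/2, m)])]
  apply staysIn_append hρ
  rw [← hy_def]
  show StaysIn Z y ((α/2, m) :: (ρ'.map (fun p => (p.1 / 2, p.2)) ++ [(α/2, m)]))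
  refine ⟨?_, ?_⟩
  · intro t ht
    exact hseg t ⟨ht.1, by linarith [ht.2]⟩
  · have hmid : y + (α/2) • m = (1/2:ℝ) • (y + α • m) + (1/2:ℝ) • y := by module
    rw [hmid]
    apply staysIn_append (staysIn_half hZ hyZ hrest)
    rw [endPt_half]
    set E := endPt (y + α • m) ρ' with hE_def
    have hEZ : E ∈ Z := staysIn_end hrest
    refine ⟨?_, ?_⟩
    · intro t ht
      have h2t : (2*t) ∈ Set.Icc (0:ℝ) α := ⟨by linarith [ht.1], by linarith [ht.2]⟩
      have := hZ hEZ (hseg (2*t) h2t) (by norm_num) (by norm_num) (by norm_num : (1/2:ℝ)+1/2=1)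
      convert this using 1
      module
    · show (1/2:ℝ) • E + (1/2:ℝ) • y + (α/2) • m ∈ Z
      have := hZ hEZ (hseg α ⟨hα.le, le_refl α⟩) (by norm_num) (by norm_num) (by norm_num : (1/2:ℝ)+1/2=1)
      convert this using 1
      module
end
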